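/- Let n₁, n₂ be positive integers, n = n₁ + n₂, and a₀ > 0 a real constant. Then (n₁/2)·log(n(n₁ + 2a₀)/(n₁(n + 2a₀))) + (n₂/2)·log(n(n₂ + 2a₀)/(n₂(n + 2a₀))) ≤ a₀. -/

import Mathlib

theorem correction_term_le (n₁ n₂ : ℕ) (h₁ : 0 < n₁) (h₂ : 0 < n₂) (a₀ : ℝ) (ha : 0 < a₀) :
    ((n₁ : ℝ) / 2) *
        Real.log (((n₁ : ℝ) + (n₂ : ℝ)) * ((n₁ : ℝ) + 2 * a₀) /
          ((n₁ : ℝ) * ((n₁ : ℝ) + (n₂ : ℝ) + 2 * a₀)))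
      + ((n₂ : ℝ) / 2) *
        Real.log (((n₁ : ℝ) + (n₂ : ℝ)) * ((n₂ : ℝ) + 2 * a₀) /
          ((n₂ : ℝ) * ((n₁ : ℝ) + (n₂ : ℝ) + 2 * a₀))) ≤ a₀ := by
  have hx1 : (0:ℝ) < (n₁ : ℝ) := by exact_mod_cast h₁
  have hx2 : (0:ℝ) < (n₂ : ℝ) := by exact_mod_cast h₂
  set x1 : ℝ := (n₁ : ℝ)
  set x2 : ℝ := (n₂ : ℝ)
  have hd : (0:ℝ) < x1 + x2 + 2 * a₀ := by linarith
  have hA1 : (0:ℝ) < (x1 + x2) * (x1 + 2 * a₀) / (x1 * (x1 + x2 + 2 * a₀)) := by positivity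
  have hA2 : (0:ℝ) < (x1 + x2) * (x2 + 2 * a₀) / (x2 * (x1 + x2 + 2 * a₀)) := by positivity
  have hl1 := Real.log_le_sub_one_of_pos hA1
  have hl2 := Real.log_le_sub_one_of_pos hA2
  have hm1 : (x1 / 2) * Real.log ((x1 + x2) * (x1 + 2 * a₀) / (x1 * (x1 + x2 + 2 * a₀)))
      ≤ (x1 / 2) * ((x1 + x2) * (x1 + 2 * a₀) / (x1 * (x1 + x2 + 2 * a₀)) - 1) := by
    apply mul_le_mul_of_nonneg_left hl1 (by positivity)
  have hm2 : (x2 / 2) * Real.log ((x1 + x2) * (x2 + 2 * a₀) / (x2 * (x1 + x2 + 2 * a₀)))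
      ≤ (x2 / 2) * ((x1 + x2) * (x2 + 2 * a₀) / (x2 * (x1 + x2 + 2 * a₀)) - 1) := by
    apply mul_le_mul_of_nonneg_left hl2 (by positivity)
  have hkey : (x1 / 2) * ((x1 + x2) * (x1 + 2 * a₀) / (x1 * (x1 + x2 + 2 * a₀)) - 1)
      + (x2 / 2) * ((x1 + x2) * (x2 + 2 * a₀) / (x2 * (x1 + x2 + 2 * a₀)) - 1) ≤ a₀ := by
    have e1 : (x1 / 2) * ((x1 + x2) * (x1 + 2 * a₀) / (x1 * (x1 + x2 + 2 * a₀)) - 1)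
        = a₀ * x2 / (x1 + x2 + 2 * a₀) := by
      field_simp
      ring
    have e2 : (x2 / 2) * ((x1 + x2) * (x2 + 2 * a₀) / (x2 * (x1 + x2 + 2 * a₀)) - 1)
        = a₀ * x1 / (x1 + x2 + 2 * a₀) := by
      field_simp
      ring
    rw [e1, e2, ← add_div, div_le_iff₀ hd]
    nlinarith
  linarith
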